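/- If S_n(A) ≠ {0} and ℓ ≤ n, then S_n(A) is contained in the kernel of the ℓ-local open boundary parent Hamiltonian H_n(A,ℓ) = Σ_{i=0}^{n−ℓ} 1^{⊗i} ⊗ h ⊗ 1^{⊗(n−ℓ−i)}, where h is the orthogonal projector onto S_ℓ(A)^⊥; in particular H_n(A,ℓ) is frustration free with the MPS as ground states. -/

import Mathlib

open scoped BigOperators

noncomputable section

def prodA {d D : ℕ} (A : Fin d → Matrix (Fin D) (Fin D) ℂ) {k : ℕ} (s : Fin k → Fin d) :
    Matrix (Fin D) (Fin D) ℂ :=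
  (List.ofFn fun t => A (s t)).prod

/-- The MPS state |X[A]^k⟩ in the Hilbert space H^{⊗k} = EuclideanSpace ℂ (Fin k → Fin d). -/
def mpsVec {d D : ℕ} (A : Fin d → Matrix (Fin D) (Fin D) ℂ) (X : Matrix (Fin D) (Fin D) ℂ)
    (k : ℕ) : EuclideanSpace ℂ (Fin k → Fin d) :=
  WithLp.toLp 2 (fun s => (X * prodA A s).trace)

/-- The physical MPS subspace S_k(A) ⊆ H^{⊗k}. -/
def mpsSpace {d D : ℕ} (A : Fin d → Matrix (Fin D) (Fin D) ℂ) (k : ℕ) :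
    Submodule ℂ (EuclideanSpace ℂ (Fin k → Fin d)) :=
  Submodule.span ℂ (Set.range fun X => mpsVec A X k)

/-- The orthogonal projector h onto S_ℓ(A)^⊥, as a map on H^{⊗ℓ}. -/
def localProj {d D : ℕ} (A : Fin d → Matrix (Fin D) (Fin D) ℂ) (l : ℕ) :
    EuclideanSpace ℂ (Fin l → Fin d) → EuclideanSpace ℂ (Fin l → Fin d) :=
  fun v => ((Submodule.orthogonalProjectionOnto (mpsSpace A l)ᗮ v : (mpsSpace A l)ᗮ) :
    EuclideanSpace ℂ (Fin l → Fin d))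

/-- The operator 1^{⊗i} ⊗ O ⊗ 1^{⊗(n−ℓ−i)} on H^{⊗n}, acting as `O` on the window of `ℓ`
sites starting at site `i`, and as the identity elsewhere. -/
def embedAt {d : ℕ} (n l i : ℕ) (hi : i + l ≤ n)
    (O : EuclideanSpace ℂ (Fin l → Fin d) → EuclideanSpace ℂ (Fin l → Fin d))
    (v : EuclideanSpace ℂ (Fin n → Fin d)) : EuclideanSpace ℂ (Fin n → Fin d) :=
  WithLp.toLp 2 (fun s => ∑ t : Fin l → Fin d,
    O (WithLp.toLp 2 (fun u => if u = t then 1 else 0)) (fun r => s ⟨i + (r : ℕ), by omega⟩) *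
      v (fun j => if h : i ≤ (j : ℕ) ∧ (j : ℕ) < i + l then t ⟨(j : ℕ) - i, by omega⟩ else s j))

/-- The ℓ-local open-boundary parent Hamiltonian H_n(A,ℓ) = ∑_{i=0}^{n−ℓ} 1^{⊗i} ⊗ h ⊗ 1^{⊗(n−ℓ−i)}
with h the orthogonal projector onto S_ℓ(A)^⊥, as an operator on H^{⊗n}. -/
def parentH {d D : ℕ} (A : Fin d → Matrix (Fin D) (Fin D) ℂ) (n l : ℕ) (hl : l ≤ n)
    (v : EuclideanSpace ℂ (Fin n → Fin d)) : EuclideanSpace ℂ (Fin n → Fin d) :=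
  ∑ i ∈ (Finset.range (n - l + 1)).attach,
    embedAt n l (i : ℕ) (by have := Finset.mem_range.mp i.2; omega) (localProj A l) v

/-! ### Auxiliary lemmas -/

lemma euc_add_apply {ι : Type*} (v w : EuclideanSpace ℂ ι) (j : ι) :
    (v + w) j = v j + w j := rfl

lemma euc_smul_apply {ι : Type*} (c : ℂ) (v : EuclideanSpace ℂ ι) (j : ι) :
    (c • v) j = c * v j := rfl

lemma euc_zero_apply {ι : Type*} (j : ι) : (0 : EuclideanSpace ℂ ι) j = 0 := rfl

/-- `localProj` as a linear map. -/
def localProjL {d D : ℕ} (A : Fin d → Matrix (Fin D) (Fin D) ℂ) (l : ℕ) :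
    EuclideanSpace ℂ (Fin l → Fin d) →ₗ[ℂ] EuclideanSpace ℂ (Fin l → Fin d) :=
  ((mpsSpace A l)ᗮ).subtype.comp (Submodule.orthogonalProjectionOnto (mpsSpace A l)ᗮ).toLinearMap

lemma localProj_eq_localProjL {d D : ℕ} (A : Fin d → Matrix (Fin D) (Fin D) ℂ) (l : ℕ) :
    localProj A l = ⇑(localProjL A l) := funext fun v => rfl

lemma localProj_mem_zero {d D : ℕ} (A : Fin d → Matrix (Fin D) (Fin D) ℂ) (l : ℕ)
    {u : EuclideanSpace ℂ (Fin l → Fin d)} (hu : u ∈ mpsSpace A l) :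
    localProj A l u = 0 := by
  unfold localProj
  rw [Submodule.orthogonalProjectionOnto_apply_of_mem_orthogonal
    (Submodule.le_orthogonal_orthogonal _ hu)]
  rfl

lemma prodA_cast {d D : ℕ} (A : Fin d → Matrix (Fin D) (Fin D) ℂ) {m n : ℕ} (h : m = n)
    (s : Fin n → Fin d) :
    prodA A s = prodA A (fun r : Fin m => s (Fin.cast h r)) := by
  subst h; rfl

lemma prodA_split {d D a b : ℕ} (A : Fin d → Matrix (Fin D) (Fin D) ℂ)
    (s : Fin (a + b) → Fin d) :
    prodA A s = prodA A (fun r : Fin a => s (Fin.castAdd b r)) *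
      prodA A (fun r : Fin b => s (Fin.natAdd a r)) := by
  unfold prodA
  rw [List.ofFn_add, List.prod_append]
  rfl

/-- Evaluation of a finite sum in EuclideanSpace. -/
lemma euc_sum_apply {γ ι : Type*} (S : Finset γ) (f : γ → EuclideanSpace ℂ ι) (j : ι) :
    (∑ t ∈ S, f t) j = ∑ t ∈ S, f t j := by
  classical
  induction S using Finset.induction with
  | empty => rfl
  | insert _ _ h ih =>
    rw [Finset.sum_insert h, Finset.sum_insert h, ← ih]
    rfl

lemma euc_eq_sum_single {ι : Type*} [Fintype ι] [DecidableEq ι]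
    (u : EuclideanSpace ℂ ι) :
    u = ∑ t : ι, u t • (WithLp.toLp 2 (fun r => if r = t then 1 else 0) : EuclideanSpace ℂ ι) := by
  ext j
  rw [euc_sum_apply]
  rw [Finset.sum_eq_single j]
  · show u j = u j * (if j = j then 1 else 0)
    simp
  · intro b _ hb
    show u b * (if j = b then 1 else 0) = 0
    simp [Ne.symm hb]
  · simp

lemma key_sum {d D : ℕ} (A : Fin d → Matrix (Fin D) (Fin D) ℂ) (l : ℕ)
    (u : EuclideanSpace ℂ (Fin l → Fin d)) (w : Fin l → Fin d) :
    ∑ t : Fin l → Fin d,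
      localProj A l (WithLp.toLp 2 (fun r => if r = t then 1 else 0)) w * u t = localProj A l u w := by
  conv_rhs => rw [euc_eq_sum_single u]
  rw [localProj_eq_localProjL, map_sum, euc_sum_apply]
  apply Finset.sum_congr rfl
  intro t _
  rw [map_smul, ← localProj_eq_localProjL, euc_smul_apply]
  ring

lemma embedAt_mpsVec {d D : ℕ} (A : Fin d → Matrix (Fin D) (Fin D) ℂ)
    (X : Matrix (Fin D) (Fin D) ℂ) (n l i : ℕ) (hi : i + l ≤ n) :
    embedAt n l i hi (localProj A l) (mpsVec A X n) = 0 := by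
  ext s
  rw [show (0 : EuclideanSpace ℂ (Fin n → Fin d)) s = (0 : ℂ) from rfl]
  set m := n - (i + l) with hm
  have hn : i + (l + m) = n := by omega
  set L := prodA A (fun r : Fin i => s ⟨(r : ℕ), by omega⟩) with hL
  set R := prodA A (fun r : Fin m => s ⟨i + (l + (r : ℕ)), by omega⟩) with hR
  have key : ∀ t : Fin l → Fin d,
      mpsVec A X n (fun j => if h : i ≤ (j : ℕ) ∧ (j : ℕ) < i + l
        then t ⟨(j : ℕ) - i, by omega⟩ else s j) = mpsVec A (R * X * L) l t := by
    intro t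
    set s' : Fin n → Fin d := fun j => if h : i ≤ (j : ℕ) ∧ (j : ℕ) < i + l
        then t ⟨(j : ℕ) - i, by omega⟩ else s j with hs'
    have h1 : prodA A s' = L * (prodA A t * R) := by
      rw [prodA_cast A hn s', prodA_split, prodA_split, hL, hR]
      congr 1
      · apply congrArg
        funext r
        have hr : ((Fin.cast hn (Fin.castAdd (l + m) r) : Fin n) : ℕ) = (r : ℕ) := rfl
        show s' _ = s ⟨(r : ℕ), by omega⟩
        simp only [hs']
        have hneg : ¬ (i ≤ ((Fin.cast hn (Fin.castAdd (l + m) r) : Fin n) : ℕ) ∧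
            ((Fin.cast hn (Fin.castAdd (l + m) r) : Fin n) : ℕ) < i + l) := by
          rw [hr]; omega
        rw [dif_neg hneg]
        exact congrArg s (Fin.ext hr)
      congr 1
      · apply congrArg
        funext r
        have hr : ((Fin.cast hn (Fin.natAdd i (Fin.castAdd m r)) : Fin n) : ℕ)
            = i + (r : ℕ) := rfl
        show s' _ = t r
        simp only [hs']
        have hc : i ≤ ((Fin.cast hn (Fin.natAdd i (Fin.castAdd m r)) : Fin n) : ℕ) ∧
            ((Fin.cast hn (Fin.natAdd i (Fin.castAdd m r)) : Fin n) : ℕ) < i + l := by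
          rw [hr]; omega
        rw [dif_pos hc]
        congr 1
        apply Fin.ext
        show ((Fin.cast hn (Fin.natAdd i (Fin.castAdd m r)) : Fin n) : ℕ) - i = (r : ℕ)
        rw [hr]; omega
      · apply congrArg
        funext r
        have hr : ((Fin.cast hn (Fin.natAdd i (Fin.natAdd l r)) : Fin n) : ℕ)
            = i + (l + (r : ℕ)) := rfl
        show s' _ = s ⟨i + (l + (r : ℕ)), by omega⟩
        simp only [hs']
        have hneg : ¬ (i ≤ ((Fin.cast hn (Fin.natAdd i (Fin.natAdd l r)) : Fin n) : ℕ) ∧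
            ((Fin.cast hn (Fin.natAdd i (Fin.natAdd l r)) : Fin n) : ℕ) < i + l) := by
          rw [hr]; omega
        rw [dif_neg hneg]
        exact congrArg s (Fin.ext hr)
    show (X * prodA A s').trace = ((R * X * L) * prodA A t).trace
    rw [h1]
    rw [show X * (L * (prodA A t * R)) = (X * L * prodA A t) * R by
      rw [mul_assoc, mul_assoc]]
    rw [Matrix.trace_mul_comm]
    rw [show R * (X * L * prodA A t) = (R * X * L) * prodA A t by
      rw [mul_assoc, mul_assoc, mul_assoc]]
  show (∑ t : Fin l → Fin d,
      localProj A l (WithLp.toLp 2 (fun u => if u = t then 1 else 0)) (fun r => s ⟨i + (r : ℕ), by omega⟩) *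
        mpsVec A X n (fun j => if h : i ≤ (j : ℕ) ∧ (j : ℕ) < i + l
          then t ⟨(j : ℕ) - i, by omega⟩ else s j)) = (0 : ℂ)
  rw [Finset.sum_congr rfl (fun t _ => by rw [key t]), key_sum,
    localProj_mem_zero A l (Submodule.subset_span ⟨R * X * L, rfl⟩)]
  rfl

lemma embedAt_add {d : ℕ} (n l i : ℕ) (hi : i + l ≤ n)
    (O : EuclideanSpace ℂ (Fin l → Fin d) → EuclideanSpace ℂ (Fin l → Fin d))
    (v w : EuclideanSpace ℂ (Fin n → Fin d)) :
    embedAt n l i hi O (v + w) = embedAt n l i hi O v + embedAt n l i hi O w := by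
  ext s
  rw [euc_add_apply]
  simp only [embedAt, euc_add_apply, mul_add, Finset.sum_add_distrib]

lemma embedAt_smul {d : ℕ} (n l i : ℕ) (hi : i + l ≤ n)
    (O : EuclideanSpace ℂ (Fin l → Fin d) → EuclideanSpace ℂ (Fin l → Fin d))
    (c : ℂ) (v : EuclideanSpace ℂ (Fin n → Fin d)) :
    embedAt n l i hi O (c • v) = c • embedAt n l i hi O v := by
  ext s
  rw [euc_smul_apply]
  simp only [embedAt, euc_smul_apply, Finset.mul_sum]
  exact Finset.sum_congr rfl fun t _ => by ring

lemma parentH_add {d D : ℕ} (A : Fin d → Matrix (Fin D) (Fin D) ℂ) (n l : ℕ) (hl : l ≤ n)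
    (v w : EuclideanSpace ℂ (Fin n → Fin d)) :
    parentH A n l hl (v + w) = parentH A n l hl v + parentH A n l hl w := by
  unfold parentH
  rw [← Finset.sum_add_distrib]
  exact Finset.sum_congr rfl fun i _ => embedAt_add ..

lemma parentH_smul {d D : ℕ} (A : Fin d → Matrix (Fin D) (Fin D) ℂ) (n l : ℕ) (hl : l ≤ n)
    (c : ℂ) (v : EuclideanSpace ℂ (Fin n → Fin d)) :
    parentH A n l hl (c • v) = c • parentH A n l hl v := by
  unfold parentH
  rw [Finset.smul_sum]
  exact Finset.sum_congr rfl fun i _ => embedAt_smul ..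

lemma parentH_mpsVec {d D : ℕ} (A : Fin d → Matrix (Fin D) (Fin D) ℂ) (n l : ℕ) (hl : l ≤ n)
    (X : Matrix (Fin D) (Fin D) ℂ) :
    parentH A n l hl (mpsVec A X n) = 0 := by
  unfold parentH
  apply Finset.sum_eq_zero
  intro i _
  exact embedAt_mpsVec A X n l (i : ℕ) (by have := Finset.mem_range.mp i.2; omega)

/-- if S_n(A) ≠ {0} and ℓ ≤ n, then S_n(A) is contained in the kernel of the
ℓ-local open-boundary parent Hamiltonian; in particular the parent Hamiltonian is
frustration free, with the MPS as (zero-energy) ground states. -/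
theorem mpsSpace_le_ker_parentH {d D : ℕ} (A : Fin d → Matrix (Fin D) (Fin D) ℂ)
    (n l : ℕ) (hl : l ≤ n) (hS : mpsSpace A n ≠ ⊥) :
    (∀ v ∈ mpsSpace A n, parentH A n l hl v = 0) ∧
    ∃ v : EuclideanSpace ℂ (Fin n → Fin d), v ≠ 0 ∧ parentH A n l hl v = 0 := by
  have main : ∀ v ∈ mpsSpace A n, parentH A n l hl v = 0 := by
    intro v hv
    induction hv using Submodule.span_induction with
    | mem x hx =>
      obtain ⟨X, rfl⟩ := hx
      exact parentH_mpsVec A n l hl X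
    | zero =>
      have : parentH A n l hl ((0 : ℂ) • (0 : EuclideanSpace ℂ (Fin n → Fin d)))
          = (0 : ℂ) • parentH A n l hl 0 := parentH_smul A n l hl 0 0
      simpa using this
    | add x y _ _ hx hy => rw [parentH_add, hx, hy, add_zero]
    | smul c x _ hx => rw [parentH_smul, hx, smul_zero]
  refine ⟨main, ?_⟩
  obtain ⟨v, hv, hv0⟩ := Submodule.exists_mem_ne_zero_of_ne_bot hS
  exact ⟨v, hv0, main v hv⟩
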